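/- For the complete t-partite graph K(u_1, ..., u_t) on n = u_1 + ... + u_t vertices, the number of partitions of its vertex set into t+1 nonempty independent sets equals (sum over i of 2^{u_i - 1}) minus t. -/
import Mathlib

open Finset

namespace Stmt3Aux

variable {t : ℕ} {u : Fin t → ℕ}

abbrev V (u : Fin t → ℕ) := Σ i : Fin t, Fin (u i)

def emb (u : Fin t → ℕ) (i : Fin t) : Fin (u i) ↪ V u :=
  ⟨fun y => ⟨i, y⟩, fun a b h => by simpa using h⟩

@[simp] lemma emb_apply {i : Fin t} (y : Fin (u i)) : emb u i y = ⟨i, y⟩ := rfl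

def cls (u : Fin t → ℕ) (i : Fin t) : Finset (V u) := Finset.univ.map (emb u i)

lemma mem_cls {i : Fin t} {x : V u} : x ∈ cls u i ↔ x.1 = i := by
  obtain ⟨j, z⟩ := x
  constructor
  · intro h
    obtain ⟨y, -, hy⟩ := Finset.mem_map.1 h
    rw [emb_apply] at hy
    exact ((Sigma.mk.inj_iff.1 hy).1).symm
  · rintro rfl
    exact Finset.mem_map.2 ⟨z, Finset.mem_univ z, rfl⟩

lemma mem_map_emb {i : Fin t} {s : Finset (Fin (u i))} {y : Fin (u i)} :
    (⟨i, y⟩ : V u) ∈ s.map (emb u i) ↔ y ∈ s := by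
  rw [← emb_apply y]; exact Finset.mem_map' _

lemma map_emb_subset_cls {i : Fin t} (s : Finset (Fin (u i))) :
    s.map (emb u i) ⊆ cls u i := by
  intro x hx
  obtain ⟨y, -, rfl⟩ := Finset.mem_map.1 hx
  rw [emb_apply]
  exact mem_cls.2 rfl

lemma eq_map_of_subset_cls {i : Fin t} {p : Finset (V u)} (hp : p ⊆ cls u i) :
    ((Finset.univ.filter fun y => (⟨i, y⟩ : V u) ∈ p).map (emb u i)) = p := by
  ext x
  constructor
  · intro hx
    obtain ⟨y, hy, rfl⟩ := Finset.mem_map.1 hx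
    rw [emb_apply]
    exact (Finset.mem_filter.1 hy).2
  · intro hx
    obtain ⟨j, z⟩ := x
    obtain rfl : j = i := mem_cls.1 (hp hx)
    exact Finset.mem_map.2 ⟨z, Finset.mem_filter.2 ⟨Finset.mem_univ _, hx⟩, rfl⟩

lemma map_compl {i : Fin t} (s : Finset (Fin (u i))) :
    sᶜ.map (emb u i) = cls u i \ s.map (emb u i) := by
  ext x
  obtain ⟨j, z⟩ := x
  constructor
  · intro hx
    obtain ⟨y, hy, hyx⟩ := Finset.mem_map.1 hx
    rw [emb_apply] at hyx
    obtain ⟨rfl, hz⟩ := Sigma.mk.inj_iff.1 hyx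
    obtain rfl : y = z := eq_of_heq hz
    exact Finset.mem_sdiff.2 ⟨mem_cls.2 rfl, fun h => (Finset.mem_compl.1 hy) (mem_map_emb.1 h)⟩
  · intro hx
    obtain ⟨h1, h2⟩ := Finset.mem_sdiff.1 hx
    obtain rfl : j = i := mem_cls.1 h1
    exact mem_map_emb.2 (Finset.mem_compl.2 fun h => h2 (mem_map_emb.2 h))

lemma cls_disj {i j : Fin t} (h : i ≠ j) : Disjoint (cls u i) (cls u j) :=
  Finset.disjoint_left.2 fun _ hx hy => h ((mem_cls.1 hx).symm.trans (mem_cls.1 hy))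

lemma cls_nonempty (hu : ∀ i, 1 ≤ u i) (i : Fin t) : (cls u i).Nonempty :=
  ⟨⟨i, ⟨0, hu i⟩⟩, mem_cls.2 rfl⟩

/-- The parts of the partition determined by `(i, s)`. -/
def prts (u : Fin t → ℕ) (i : Fin t) (s : Finset (Fin (u i))) : Finset (Finset (V u)) :=
  insert (s.map (emb u i)) (insert (sᶜ.map (emb u i)) ((Finset.univ.erase i).image (cls u)))

lemma mem_prts {i : Fin t} {s : Finset (Fin (u i))} {p : Finset (V u)} :
    p ∈ prts u i s ↔ p = s.map (emb u i) ∨ p = sᶜ.map (emb u i) ∨ ∃ j ≠ i, p = cls u j := by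
  simp only [prts, Finset.mem_insert, Finset.mem_image, Finset.mem_erase, Finset.mem_univ,
    and_true]
  constructor
  · rintro (h | h | ⟨j, hj, rfl⟩)
    · exact Or.inl h
    · exact Or.inr (Or.inl h)
    · exact Or.inr (Or.inr ⟨j, hj, rfl⟩)
  · rintro (h | h | ⟨j, hj, rfl⟩)
    · exact Or.inl h
    · exact Or.inr (Or.inl h)
    · exact Or.inr (Or.inr ⟨j, ⟨hj, rfl⟩⟩)

section gpart

variable (hu : ∀ i, 1 ≤ u i) (i : Fin t) (s : Finset (Fin (u i)))
  (h0 : (⟨0, hu i⟩ : Fin (u i)) ∈ s) (hne : s ≠ Finset.univ)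

/-- The partition of the vertex set determined by `(i, s)`. -/
def gpart : Finpartition (Finset.univ : Finset (V u)) where
  parts := prts u i s
  supIndep := by
    rw [Finset.supIndep_iff_pairwiseDisjoint]
    intro p hp q hq hpq
    rw [Finset.mem_coe, mem_prts] at hp hq
    have hAB : Disjoint (s.map (emb u i)) (sᶜ.map (emb u i)) := by
      rw [map_compl]; exact disjoint_sdiff_self_right
    rcases hp with rfl | rfl | ⟨j, hj, rfl⟩ <;>
      rcases hq with rfl | rfl | ⟨j', hj', rfl⟩
    · exact absurd rfl hpq
    · exact hAB
    · exact Disjoint.mono_left (map_emb_subset_cls s) (cls_disj (Ne.symm hj'))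
    · exact hAB.symm
    · exact absurd rfl hpq
    · exact Disjoint.mono_left (map_emb_subset_cls sᶜ) (cls_disj (Ne.symm hj'))
    · exact Disjoint.mono_right (map_emb_subset_cls s) (cls_disj hj)
    · exact Disjoint.mono_right (map_emb_subset_cls sᶜ) (cls_disj hj)
    · refine cls_disj fun h => hpq ?_
      subst h; rfl
  sup_parts := by
    apply Finset.Subset.antisymm
    · intro x hx
      exact Finset.mem_univ x
    · intro x _
      rw [Finset.mem_sup]
      obtain ⟨j, z⟩ := x
      by_cases hji : j = i
      · subst hji
        by_cases hz : z ∈ s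
        · exact ⟨s.map (emb u j), mem_prts.2 (Or.inl rfl), mem_map_emb.2 hz⟩
        · exact ⟨sᶜ.map (emb u j), mem_prts.2 (Or.inr (Or.inl rfl)),
            mem_map_emb.2 (Finset.mem_compl.2 hz)⟩
      · exact ⟨cls u j, mem_prts.2 (Or.inr (Or.inr ⟨j, hji, rfl⟩)), mem_cls.2 rfl⟩
  bot_notMem := by
    intro hbot
    rcases mem_prts.1 hbot with h | h | ⟨j, hj, h⟩
    · have : (⟨i, ⟨0, hu i⟩⟩ : V u) ∈ s.map (emb u i) := mem_map_emb.2 h0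
      rw [← h] at this
      exact Finset.notMem_empty _ this
    · have hsc : sᶜ.Nonempty := by
        rw [Finset.nonempty_iff_ne_empty]
        intro hc
        exact hne (by rwa [Finset.compl_eq_empty_iff] at hc)
      obtain ⟨y, hy⟩ := hsc
      have : (⟨i, y⟩ : V u) ∈ sᶜ.map (emb u i) := mem_map_emb.2 hy
      rw [← h] at this
      exact Finset.notMem_empty _ this
    · obtain ⟨x, hx⟩ := cls_nonempty hu j
      rw [← h] at hx
      exact Finset.notMem_empty _ hx

lemma gpart_parts : (gpart hu i s h0 hne).parts = prts u i s := rfl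

include h0 hne in
lemma card_prts : (prts u i s).card = t + 1 := by
  have hA : (⟨i, ⟨0, hu i⟩⟩ : V u) ∈ s.map (emb u i) := mem_map_emb.2 h0
  have hAnotB : s.map (emb u i) ≠ sᶜ.map (emb u i) := by
    intro h
    rw [h] at hA
    exact Finset.mem_compl.1 (mem_map_emb.1 hA) h0
  have hBne : sᶜ.Nonempty := by
    rw [Finset.nonempty_iff_ne_empty]
    intro hc
    exact hne (by rwa [Finset.compl_eq_empty_iff] at hc)
  have hnotcls : ∀ (r : Finset (Fin (u i))), r.Nonempty →
      ∀ j ∈ Finset.univ.erase i, r.map (emb u i) ≠ cls u j := by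
    rintro r ⟨y, hy⟩ j hj h
    have : (⟨i, y⟩ : V u) ∈ cls u j := h ▸ mem_map_emb.2 hy
    exact (Finset.mem_erase.1 hj).1 (mem_cls.1 this).symm
  have hAnotimg : s.map (emb u i) ∉ (Finset.univ.erase i).image (cls u) := by
    intro h
    obtain ⟨j, hj, hcj⟩ := Finset.mem_image.1 h
    exact hnotcls s ⟨_, h0⟩ j hj hcj.symm
  have hBnotimg : sᶜ.map (emb u i) ∉ (Finset.univ.erase i).image (cls u) := by
    intro h
    obtain ⟨j, hj, hcj⟩ := Finset.mem_image.1 h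
    exact hnotcls sᶜ hBne j hj hcj.symm
  have hinj : Set.InjOn (cls u) (Finset.univ.erase i : Finset (Fin t)) := by
    intro a _ b _ hab
    have : (⟨a, ⟨0, hu a⟩⟩ : V u) ∈ cls u b := hab ▸ mem_cls.2 rfl
    exact mem_cls.1 this
  have himg : ((Finset.univ.erase i).image (cls u)).card = t - 1 := by
    rw [Finset.card_image_of_injOn hinj, Finset.card_erase_of_mem (Finset.mem_univ i),
      Finset.card_univ, Fintype.card_fin]
  have ht : 1 ≤ t := Nat.pos_of_ne_zero fun h => (h ▸ i).elim0
  rw [prts, Finset.card_insert_of_notMem, Finset.card_insert_of_notMem hBnotimg, himg]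
  · omega
  · rw [Finset.mem_insert]
    rintro (h | h)
    · exact hAnotB h
    · exact hAnotimg h

end gpart

lemma card_filter_mem {α : Type*} [Fintype α] [DecidableEq α] (a : α) :
    (Finset.univ.filter fun s : Finset α => a ∈ s).card = 2 ^ (Fintype.card α - 1) := by
  have : ((Finset.univ.erase a).powerset).card = 2 ^ (Fintype.card α - 1) := by
    rw [Finset.card_powerset, Finset.card_erase_of_mem (Finset.mem_univ a), Finset.card_univ]
  rw [← this]
  refine Finset.card_bij' (fun s _ => s.erase a) (fun r _ => insert a r) ?_ ?_ ?_ ?_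
  · intro s hs
    exact Finset.mem_powerset.2 (Finset.erase_subset_erase a (Finset.subset_univ s))
  · intro r hr
    exact Finset.mem_filter.2 ⟨Finset.mem_univ _, Finset.mem_insert_self a r⟩
  · intro s hs
    exact Finset.insert_erase ((Finset.mem_filter.1 hs).2)
  · intro r hr
    refine Finset.erase_insert fun ha => ?_
    have := Finset.mem_powerset.1 hr ha
    exact (Finset.mem_erase.1 this).1 rfl

lemma card_subtype (α : Type*) [Fintype α] [DecidableEq α] (a : α) :
    Nat.card {s : Finset α // a ∈ s ∧ s ≠ Finset.univ} = 2 ^ (Fintype.card α - 1) - 1 := by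
  rw [Nat.card_eq_fintype_card, Fintype.card_subtype]
  have h1 : (Finset.univ.filter fun s : Finset α => a ∈ s ∧ s ≠ Finset.univ)
      = (Finset.univ.filter fun s : Finset α => a ∈ s).erase Finset.univ := by
    ext s
    simp only [Finset.mem_filter, Finset.mem_univ, true_and, Finset.mem_erase]
    tauto
  rw [h1, Finset.card_erase_of_mem (by simp), card_filter_mem]


lemma prts_inj (hu : ∀ i, 1 ≤ u i) {i i' : Fin t} {s : Finset (Fin (u i))}
    {s' : Finset (Fin (u i'))} (h0 : (⟨0, hu i⟩ : Fin (u i)) ∈ s) (hne : s ≠ Finset.univ)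
    (h0' : (⟨0, hu i'⟩ : Fin (u i')) ∈ s') (hne' : s' ≠ Finset.univ)
    (h : prts u i s = prts u i' s') :
    (⟨i, s⟩ : Σ j : Fin t, Finset (Fin (u j))) = ⟨i', s'⟩ := by
  have hii : i = i' := by
    by_contra hii
    have hmem : cls u i' ∈ prts u i' s' :=
      h ▸ mem_prts.2 (Or.inr (Or.inr ⟨i', fun hc => hii hc.symm, rfl⟩))
    rcases mem_prts.1 hmem with hA | hB | ⟨j, hj, hcj⟩
    · have hemp : s'ᶜ.map (emb u i') = ∅ := by
        rw [map_compl, hA, Finset.sdiff_self]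
      have := Finset.map_eq_empty.1 hemp
      exact hne' (by rwa [Finset.compl_eq_empty_iff] at this)
    · have : (⟨i', ⟨0, hu i'⟩⟩ : V u) ∈ s'ᶜ.map (emb u i') := hB ▸ mem_cls.2 rfl
      exact Finset.mem_compl.1 (mem_map_emb.1 this) h0'
    · have : (⟨i', ⟨0, hu i'⟩⟩ : V u) ∈ cls u j := hcj ▸ mem_cls.2 rfl
      exact hj (mem_cls.1 this).symm
  subst hii
  have hmem : s.map (emb u i) ∈ prts u i s' := h ▸ mem_prts.2 (Or.inl rfl)
  rcases mem_prts.1 hmem with hA | hB | ⟨j, hj, hcj⟩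
  · rw [Finset.map_injective _ hA]
  · have : (⟨i, ⟨0, hu i⟩⟩ : V u) ∈ s'ᶜ.map (emb u i) := hB ▸ mem_map_emb.2 h0
    exact absurd h0' (Finset.mem_compl.1 (mem_map_emb.1 this))
  · have : (⟨i, ⟨0, hu i⟩⟩ : V u) ∈ cls u j := hcj ▸ mem_map_emb.2 h0
    exact absurd (mem_cls.1 this).symm hj

lemma surj (hu : ∀ i, 1 ≤ u i) (P : Finpartition (Finset.univ : Finset (V u)))
    (hcard : P.parts.card = t + 1)
    (hind : ∀ p ∈ P.parts, ∀ v ∈ p, ∀ w ∈ p, (v : V u).1 = w.1) :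
    ∃ (i : Fin t) (s : Finset (Fin (u i))) (h0 : (⟨0, hu i⟩ : Fin (u i)) ∈ s)
      (hne : s ≠ Finset.univ), (gpart hu i s h0 hne).parts = P.parts := by
  classical
  have hex : ∀ j : Fin t, ∃ p, p ∈ P.parts ∧ (⟨j, ⟨0, hu j⟩⟩ : V u) ∈ p := by
    intro j
    obtain ⟨p, hp, hp2⟩ := P.exists_mem (Finset.mem_univ (⟨j, ⟨0, hu j⟩⟩ : V u))
    exact ⟨p, hp, hp2⟩
  choose pp hpp hv0 using hex
  have hsub : ∀ j, pp j ⊆ cls u j := fun j y hy =>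
    mem_cls.2 (hind _ (hpp j) y hy _ (hv0 j))
  have hppinj : Function.Injective pp := by
    intro j j' hjj
    have : (⟨j', ⟨0, hu j'⟩⟩ : V u) ∈ pp j := hjj ▸ hv0 j'
    exact (mem_cls.1 (hsub j this)).symm
  have himgsub : Finset.univ.image pp ⊆ P.parts := by
    intro p hp
    obtain ⟨j, -, rfl⟩ := Finset.mem_image.1 hp
    exact hpp j
  have himgcard : (Finset.univ.image pp).card = t := by
    rw [Finset.card_image_of_injective _ hppinj, Finset.card_univ, Fintype.card_fin]
  have hss : Finset.univ.image pp ⊂ P.parts := by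
    refine Finset.ssubset_iff_subset_ne.2 ⟨himgsub, fun h => ?_⟩
    rw [h, hcard] at himgcard
    omega
  obtain ⟨r, hr, hrimg⟩ := Finset.exists_of_ssubset hss
  obtain ⟨x, hx⟩ := P.nonempty_of_mem_parts hr
  set i := x.1 with hi
  have hrsub : r ⊆ cls u i := fun y hy => mem_cls.2 (hind _ hr y hy x hx)
  have hv0r : (⟨i, ⟨0, hu i⟩⟩ : V u) ∉ r := by
    intro h
    exact hrimg (Finset.mem_image.2 ⟨i, Finset.mem_univ i,
      P.eq_of_mem_parts (hpp i) hr (hv0 i) h⟩)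
  have hrne : r ≠ pp i := fun h => hv0r (h ▸ hv0 i)
  have hparts : P.parts = insert r (Finset.univ.image pp) := by
    refine (Finset.eq_of_subset_of_card_le ?_ ?_).symm
    · intro p hp
      rcases Finset.mem_insert.1 hp with rfl | hp
      · exact hr
      · exact himgsub hp
    · rw [hcard, Finset.card_insert_of_notMem hrimg, himgcard]
  set s : Finset (Fin (u i)) := Finset.univ.filter (fun y => (⟨i, y⟩ : V u) ∈ pp i) with hsdef
  have hA : s.map (emb u i) = pp i := eq_map_of_subset_cls (hsub i)
  have h0 : (⟨0, hu i⟩ : Fin (u i)) ∈ s := Finset.mem_filter.2 ⟨Finset.mem_univ _, hv0 i⟩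
  have hB : sᶜ.map (emb u i) = r := by
    rw [map_compl, hA]
    ext y
    constructor
    · intro hy
      obtain ⟨h1, h2⟩ := Finset.mem_sdiff.1 hy
      obtain ⟨q, hq, hyq⟩ := P.exists_mem (Finset.mem_univ y)
      rw [hparts] at hq
      rcases Finset.mem_insert.1 hq with rfl | hq
      · exact hyq
      · obtain ⟨j, -, rfl⟩ := Finset.mem_image.1 hq
        have hji : j = i := (mem_cls.1 (hsub j hyq)).symm.trans (mem_cls.1 h1)
        rw [hji] at hyq
        exact absurd hyq h2
    · intro hy
      refine Finset.mem_sdiff.2 ⟨hrsub hy, fun hc => ?_⟩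
      exact hrne (P.eq_of_mem_parts hr (hpp i) hy hc)
  have hnerr : s ≠ Finset.univ := by
    intro hc
    obtain ⟨y, hy⟩ := P.nonempty_of_mem_parts hr
    rw [← hB] at hy
    obtain ⟨z, hz, -⟩ := Finset.mem_map.1 hy
    rw [hc, Finset.compl_univ] at hz
    exact Finset.notMem_empty z hz
  have hcls : ∀ j, j ≠ i → cls u j = pp j := by
    intro j hj
    apply Finset.Subset.antisymm
    · intro y hy
      obtain ⟨q, hq, hyq⟩ := P.exists_mem (Finset.mem_univ y)
      rw [hparts] at hq
      rcases Finset.mem_insert.1 hq with rfl | hq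
      · exact absurd ((mem_cls.1 hy).symm.trans (mem_cls.1 (hrsub hyq))) hj
      · obtain ⟨j', -, rfl⟩ := Finset.mem_image.1 hq
        have : j' = j := (mem_cls.1 (hsub j' hyq)).symm.trans (mem_cls.1 hy)
        rwa [this] at hyq
    · exact hsub j
  refine ⟨i, s, h0, hnerr, ?_⟩
  rw [gpart_parts, hparts, prts, hA, hB]
  have himg2 : (Finset.univ.erase i).image (cls u) = (Finset.univ.erase i).image pp :=
    Finset.image_congr (fun x hx => hcls x (Finset.mem_erase.1 hx).1)
  have himg3 : Finset.univ.image pp = insert (pp i) ((Finset.univ.erase i).image pp) := by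
    rw [← Finset.image_insert, Finset.insert_erase (Finset.mem_univ i)]
  rw [himg2, himg3, Finset.insert_comm]

end Stmt3Aux


open Stmt3Aux

theorem stmt3 (t : ℕ) (u : Fin t → ℕ) (hu : ∀ i, 1 ≤ u i) :
    {P : Finpartition (Finset.univ : Finset (Σ i : Fin t, Fin (u i))) |
        P.parts.card = t + 1 ∧
        ∀ s ∈ P.parts, ∀ v ∈ s, ∀ w ∈ s,
          ¬ (SimpleGraph.completeMultipartiteGraph (fun i : Fin t => Fin (u i))).Adj v w
      }.ncard
      = (∑ i : Fin t, 2 ^ (u i - 1)) - t := by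
  classical
  have hset : {P : Finpartition (Finset.univ : Finset (Σ i : Fin t, Fin (u i))) |
        P.parts.card = t + 1 ∧
        ∀ s ∈ P.parts, ∀ v ∈ s, ∀ w ∈ s,
          ¬ (SimpleGraph.completeMultipartiteGraph (fun i : Fin t => Fin (u i))).Adj v w}
      = {P : Finpartition (Finset.univ : Finset (V u)) |
        P.parts.card = t + 1 ∧
        ∀ p ∈ P.parts, ∀ v ∈ p, ∀ w ∈ p, (v : V u).1 = w.1} := by
    ext P
    simp only [Set.mem_setOf_eq, SimpleGraph.comap_adj, SimpleGraph.top_adj, ne_eq, not_not]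
  rw [hset, ← Nat.card_coe_set_eq]
  have hQmem : ∀ (i : Fin t) (s : Finset (Fin (u i))) (h0 : (⟨0, hu i⟩ : Fin (u i)) ∈ s)
      (hne : s ≠ Finset.univ),
      (gpart hu i s h0 hne) ∈ {P : Finpartition (Finset.univ : Finset (V u)) |
        P.parts.card = t + 1 ∧
        ∀ p ∈ P.parts, ∀ v ∈ p, ∀ w ∈ p, (v : V u).1 = w.1} := by
    intro i s h0 hne
    refine ⟨by rw [gpart_parts]; exact card_prts hu i s h0 hne, ?_⟩
    intro p hp v hv w hw
    rw [gpart_parts] at hp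
    have hsubcls : ∃ j, p ⊆ cls u j := by
      rcases mem_prts.1 hp with rfl | rfl | ⟨j, hj, rfl⟩
      · exact ⟨i, map_emb_subset_cls s⟩
      · exact ⟨i, map_emb_subset_cls sᶜ⟩
      · exact ⟨j, Finset.Subset.refl _⟩
    obtain ⟨j, hj⟩ := hsubcls
    rw [mem_cls.1 (hj hv), mem_cls.1 (hj hw)]
  let D := (i : Fin t) × {s : Finset (Fin (u i)) // (⟨0, hu i⟩ : Fin (u i)) ∈ s ∧ s ≠ Finset.univ}
  let F : D → ↥{P : Finpartition (Finset.univ : Finset (V u)) |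
        P.parts.card = t + 1 ∧
        ∀ p ∈ P.parts, ∀ v ∈ p, ∀ w ∈ p, (v : V u).1 = w.1} :=
    fun d => ⟨gpart hu d.1 d.2.1 d.2.2.1 d.2.2.2, hQmem d.1 d.2.1 d.2.2.1 d.2.2.2⟩
  have hFbij : Function.Bijective F := by
    constructor
    · rintro ⟨i, s, h0, hne⟩ ⟨i', s', h0', hne'⟩ hFd
      have hpq : prts u i s = prts u i' s' :=
        congrArg (fun P => Finpartition.parts P.1) hFd
      have hsig := prts_inj hu h0 hne h0' hne' hpq
      obtain ⟨hii, hss⟩ := Sigma.mk.inj_iff.1 hsig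
      subst hii
      obtain rfl : s = s' := eq_of_heq hss
      rfl
    · rintro ⟨P, hQ⟩
      obtain ⟨i, s, h0, hne, hps⟩ := surj hu P hQ.1 hQ.2
      exact ⟨⟨i, ⟨s, h0, hne⟩⟩, Subtype.ext (Finpartition.ext hps)⟩
  rw [← Nat.card_eq_of_bijective F hFbij, Nat.card_eq_fintype_card, Fintype.card_sigma]
  have hterm : ∀ i : Fin t,
      Fintype.card {s : Finset (Fin (u i)) // (⟨0, hu i⟩ : Fin (u i)) ∈ s ∧ s ≠ Finset.univ}
        = 2 ^ (u i - 1) - 1 := by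
    intro i
    have := card_subtype (Fin (u i)) (⟨0, hu i⟩ : Fin (u i))
    rw [Nat.card_eq_fintype_card, Fintype.card_fin] at this
    exact this
  rw [Finset.sum_congr rfl (fun i _ => hterm i)]
  have hle : ∀ i : Fin t, 1 ≤ 2 ^ (u i - 1) := fun i => Nat.one_le_two_pow
  have hsum : (∑ i : Fin t, (2 ^ (u i - 1) - 1)) + (∑ _i : Fin t, (1 : ℕ))
      = ∑ i : Fin t, 2 ^ (u i - 1) := by
    rw [← Finset.sum_add_distrib]
    exact Finset.sum_congr rfl fun i _ => Nat.sub_add_cancel (hle i)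
  have ht : (∑ _i : Fin t, (1 : ℕ)) = t := by simp
  omega
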